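/- Let R be a commutative ring and let e and r be positive natural numbers. Then for every x ∈ R: (1 - x)^r · ∑_{k=0}^{e-1} H(r, k) · x^k + x^e · ∑_{k=0}^{r-1} H(e, k) · (1 - x)^k = 1, where the coefficients H(·,·) are interpreted via the natural number cast into R. -/

import Mathlib

lemma multichoose_symm_aux (s e : ℕ) :
    Nat.multichoose (s + 1) e = Nat.multichoose (e + 1) s := by
  rw [Nat.multichoose_eq, Nat.multichoose_eq]
  simp only [Nat.succ_add_sub_one]
  rw [Nat.add_comm s e]
  exact Nat.choose_symm_add

lemma step_aux (R : Type*) [CommRing R] (e r : ℕ) (hr : 0 < r) (y : R) :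
    (1 - y) * ∑ k ∈ Finset.range r, (Nat.multichoose (e + 1) k : R) * y ^ k
      = (∑ k ∈ Finset.range r, (Nat.multichoose e k : R) * y ^ k)
        - (Nat.multichoose (e + 1) (r - 1) : R) * y ^ r := by
  induction r with
  | zero => omega
  | succ n ih =>
    rcases Nat.eq_zero_or_pos n with hn | hn
    · subst hn; simp
    · rw [Finset.sum_range_succ, Finset.sum_range_succ, mul_add, ih hn]
      have hrec : (Nat.multichoose (e + 1) n : R)
          = (Nat.multichoose e n : R) + (Nat.multichoose (e + 1) (n - 1) : R) := by
        obtain ⟨m, rfl⟩ := Nat.exists_eq_add_of_lt hn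
        push_cast [Nat.zero_add, Nat.multichoose_succ_succ e m]
        ring
      simp only [Nat.add_sub_cancel]
      linear_combination (y:R)^n * hrec

theorem stmt_11 (R : Type*) [CommRing R] (e r : ℕ) (he : 0 < e) (hr : 0 < r) (x : R) :
    (1 - x) ^ r * (∑ k ∈ Finset.range e, (Nat.multichoose r k : R) * x ^ k)
        + x ^ e * (∑ k ∈ Finset.range r, (Nat.multichoose e k : R) * (1 - x) ^ k) = 1 := by
  induction e, he using Nat.le_induction with
  | base =>
    have hg : x * ∑ k ∈ Finset.range r, (1 - x) ^ k = 1 - (1 - x) ^ r := by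
      have := geom_sum_mul (1 - x) r
      have h : (1 - x) - 1 = -x := by ring
      rw [h] at this
      linear_combination -this
    simp only [Nat.multichoose_one, Nat.cast_one, one_mul, Finset.range_one,
      Finset.sum_singleton, Nat.multichoose_zero_right, pow_zero, mul_one, pow_one]
    rw [hg]; ring
  | succ n hn ih =>
    have hstep := step_aux R n r hr (1 - x)
    have h1 : (1 : R) - (1 - x) = x := by ring
    rw [h1] at hstep
    have hx : x ^ (n + 1) * (∑ k ∈ Finset.range r, (Nat.multichoose (n + 1) k : R) * (1 - x) ^ k)
        = x ^ n * ((∑ k ∈ Finset.range r, (Nat.multichoose n k : R) * (1 - x) ^ k)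
          - (Nat.multichoose (n + 1) (r - 1) : R) * (1 - x) ^ r) := by
      rw [← hstep]; ring
    rw [hx, Finset.sum_range_succ]
    have hsymm : (Nat.multichoose r n : R) = (Nat.multichoose (n + 1) (r - 1) : R) := by
      obtain ⟨s, rfl⟩ := Nat.exists_eq_add_of_lt hr
      norm_num
      rw [multichoose_symm_aux]
    rw [hsymm]
    linear_combination ih
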